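/- Assume λ₂ = 0. Then lim_{n→∞} a_n/√n = lim_{n→∞} b_n/√n = 1/(2√3), where a_n = k_n/k̂_{n-1} and b_n = k̂_n/k_{n-1}. -/

import Mathlib

open Polynomial MeasureTheory Filter Topology

/-- The Freud inner product `⟨f,g⟩_F = ∫_ℝ f(x) g(x) e^{-x⁴} dx`. -/
noncomputable def innerF (f g : Polynomial ℝ) : ℝ :=
  ∫ x : ℝ, f.eval x * g.eval x * Real.exp (-x ^ 4)


/-- The Sobolev inner product
`⟨f,g⟩_S = ⟨f,g⟩_F + λ₁ f(0) g(0) + λ₂ f'(0) g'(0)`. -/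
noncomputable def innerS (l1 l2 : ℝ) (f g : Polynomial ℝ) : ℝ :=
  innerF f g + l1 * f.eval 0 * g.eval 0
    + l2 * (Polynomial.derivative f).eval 0 * (Polynomial.derivative g).eval 0

section SFAux

lemma SF_integrable_pow (n : ℕ) :
    Integrable (fun x : ℝ => x ^ n * Real.exp (-x ^ 4)) := by
  have hg : Integrable (fun x : ℝ => Real.exp ((n:ℝ)^2/2 + 3/4) * Real.exp (-1 * x ^ 2)) :=
    (integrable_exp_neg_mul_sq one_pos).const_mul _
  refine hg.mono' ?_ ?_
  · exact (continuous_pow n |>.mul (Real.continuous_exp.comp (continuous_pow 4).neg)).aestronglyMeasurable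
  · filter_upwards with x
    have h1 : |x| ^ n ≤ Real.exp ((n:ℝ) * |x|) := by
      calc |x| ^ n ≤ Real.exp |x| ^ n := by
            exact pow_le_pow_left₀ (abs_nonneg x) (by linarith [Real.add_one_le_exp |x|]) n
        _ = Real.exp ((n:ℝ) * |x|) := by rw [← Real.exp_nat_mul]
    have h2 : (n:ℝ) * |x| - x ^ 4 ≤ (n:ℝ)^2/2 + 3/4 + (-1 * x ^ 2) := by
      nlinarith [sq_nonneg (|x| - (n:ℝ)), sq_nonneg (x^2 - 1), sq_abs x, sq_nonneg x, abs_nonneg x]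
    calc ‖x ^ n * Real.exp (-x ^ 4)‖ = |x| ^ n * Real.exp (-x ^ 4) := by
          rw [norm_mul, norm_pow, Real.norm_eq_abs, Real.norm_eq_abs,
            abs_of_pos (Real.exp_pos _)]
      _ ≤ Real.exp ((n:ℝ) * |x|) * Real.exp (-x ^ 4) :=
          mul_le_mul_of_nonneg_right h1 (Real.exp_pos _).le
      _ = Real.exp ((n:ℝ) * |x| - x ^ 4) := by rw [← Real.exp_add]; ring_nf
      _ ≤ Real.exp ((n:ℝ)^2/2 + 3/4 + (-1 * x ^ 2)) := Real.exp_le_exp.2 h2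
      _ = Real.exp ((n:ℝ)^2/2 + 3/4) * Real.exp (-1 * x ^ 2) := Real.exp_add _ _

lemma SF_integrable (p : Polynomial ℝ) :
    Integrable (fun x : ℝ => p.eval x * Real.exp (-x ^ 4)) := by
  induction p using Polynomial.induction_on' with
  | add p q hp hq => simp only [eval_add, add_mul]; exact hp.add hq
  | monomial n a =>
      simpa [mul_assoc] using (SF_integrable_pow n).const_mul a

lemma innerF_symm (f g : Polynomial ℝ) : innerF f g = innerF g f := by
  unfold innerF; congr 1; funext x; ring

lemma innerF_integrand (f g : Polynomial ℝ) :
    innerF f g = ∫ x : ℝ, (f * g).eval x * Real.exp (-x ^ 4) := by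
  unfold innerF; congr 1; funext x; simp [eval_mul, mul_assoc]

lemma innerF_add_right (f g h : Polynomial ℝ) :
    innerF f (g + h) = innerF f g + innerF f h := by
  rw [innerF_integrand, innerF_integrand, innerF_integrand, mul_add]
  have := integral_add (SF_integrable (f*g)) (SF_integrable (f*h))
  rw [← this]; congr 1; funext x; simp [eval_add, eval_mul]; ring

lemma innerF_add_left (f g h : Polynomial ℝ) :
    innerF (f + g) h = innerF f h + innerF g h := by
  rw [innerF_symm, innerF_add_right, innerF_symm h f, innerF_symm h g]

lemma innerF_sub_left (f g h : Polynomial ℝ) :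
    innerF (f - g) h = innerF f h - innerF g h := by
  have := innerF_add_left (f - g) g h
  rw [sub_add_cancel] at this
  linarith

lemma innerF_C_mul_right (f : Polynomial ℝ) (a : ℝ) (g : Polynomial ℝ) :
    innerF f (C a * g) = a * innerF f g := by
  unfold innerF
  rw [← integral_const_mul]
  congr 1; funext x; simp [eval_mul]; ring

lemma innerF_C_mul_left (f : Polynomial ℝ) (a : ℝ) (g : Polynomial ℝ) :
    innerF (C a * g) f = a * innerF g f := by
  rw [innerF_symm, innerF_C_mul_right, innerF_symm]

lemma innerF_sum (f : Polynomial ℝ) (s : Finset ℕ) (g : ℕ → Polynomial ℝ) :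
    innerF f (∑ j ∈ s, g j) = ∑ j ∈ s, innerF f (g j) := by
  induction s using Finset.induction_on with
  | empty => simp [innerF]
  | insert j s hj ih => simp [Finset.sum_insert hj, innerF_add_right, ih]

lemma innerF_X_shift (f g : Polynomial ℝ) :
    innerF (X * f) g = innerF f (X * g) := by
  unfold innerF; congr 1; funext x; simp [eval_mul]; ring

lemma SF_orthF (P : ℕ → Polynomial ℝ)
    (hPorth : ∀ n m : ℕ, m < n → innerF (P n) (X ^ m) = 0)
    (n : ℕ) (f : Polynomial ℝ) (hf : f.degree < (n : ℕ)) : innerF (P n) f = 0 := by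
  by_cases h0 : f = 0
  · simp [h0, innerF]
  have hnd : f.natDegree < n := (natDegree_lt_iff_degree_lt h0).2 hf
  conv_lhs => rw [f.as_sum_range' n hnd]
  rw [innerF_sum]
  refine Finset.sum_eq_zero fun i hi => ?_
  rw [← C_mul_X_pow_eq_monomial, innerF_C_mul_right,
    hPorth n i (Finset.mem_range.1 hi), mul_zero]

lemma SF_pos (p : Polynomial ℝ) (hp : p ≠ 0) : 0 < innerF p p := by
  have heq : innerF p p = ∫ x : ℝ, (p.eval x) ^ 2 * Real.exp (-x ^ 4) := by
    unfold innerF; congr 1; funext x; ring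
  rw [heq]
  have hnn : ∀ x : ℝ, 0 ≤ (p.eval x) ^ 2 * Real.exp (-x ^ 4) := fun x =>
    mul_nonneg (sq_nonneg _) (Real.exp_pos _).le
  have hint : Integrable (fun x : ℝ => (p.eval x) ^ 2 * Real.exp (-x ^ 4)) := by
    have := SF_integrable (p * p)
    simpa [eval_mul, sq, mul_assoc] using this
  rw [integral_pos_iff_support_of_nonneg hnn hint]
  have hsub : (Function.support fun x : ℝ => (p.eval x) ^ 2 * Real.exp (-x ^ 4))ᶜ
      ⊆ {x : ℝ | IsRoot p x} := by
    intro x hx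
    simp only [Set.mem_compl_iff, Function.mem_support, not_not] at hx
    have := Real.exp_pos (-x ^ 4)
    have : (p.eval x) ^ 2 = 0 := by
      by_contra h
      exact h (by nlinarith)
    simpa [IsRoot, sq_eq_zero_iff] using this
  by_contra hle
  push_neg at hle
  have h0 : volume (Function.support fun x : ℝ => (p.eval x) ^ 2 * Real.exp (-x ^ 4)) = 0 :=
    le_antisymm hle zero_le
  have hroots : volume {x : ℝ | IsRoot p x} = 0 :=
    (Polynomial.finite_setOf_isRoot hp).measure_zero _
  have : (volume : Measure ℝ) Set.univ = 0 := by
    have := measure_union_le (μ := (volume : Measure ℝ))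
      (Function.support fun x : ℝ => (p.eval x) ^ 2 * Real.exp (-x ^ 4))
      ((Function.support fun x : ℝ => (p.eval x) ^ 2 * Real.exp (-x ^ 4))ᶜ)
    rw [Set.union_compl_self] at this
    refine le_antisymm (this.trans ?_) zero_le
    rw [h0, zero_add]
    exact le_trans (measure_mono hsub) (le_of_eq hroots)
  simp [Real.volume_univ] at this

lemma SF_innerS_eq (l1 : ℝ) (f g : Polynomial ℝ) :
    innerS l1 0 f g = innerF f g + l1 * f.eval 0 * g.eval 0 := by
  simp [innerS]

lemma SF_innerS_add_right (l1 : ℝ) (f g h : Polynomial ℝ) :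
    innerS l1 0 f (g + h) = innerS l1 0 f g + innerS l1 0 f h := by
  simp only [SF_innerS_eq, innerF_add_right, eval_add]; ring

lemma SF_innerS_C_mul_right (l1 : ℝ) (f : Polynomial ℝ) (a : ℝ) (g : Polynomial ℝ) :
    innerS l1 0 f (C a * g) = a * innerS l1 0 f g := by
  simp only [SF_innerS_eq, innerF_C_mul_right, eval_mul, eval_C]; ring

lemma SF_innerS_sum (l1 : ℝ) (f : Polynomial ℝ) (s : Finset ℕ) (g : ℕ → Polynomial ℝ) :
    innerS l1 0 f (∑ j ∈ s, g j) = ∑ j ∈ s, innerS l1 0 f (g j) := by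
  induction s using Finset.induction_on with
  | empty => simp [SF_innerS_eq, innerF]
  | insert j s hj ih => simp [Finset.sum_insert hj, SF_innerS_add_right, ih]

lemma SF_orthS (l1 : ℝ) (Q : ℕ → Polynomial ℝ)
    (hQorth : ∀ n m : ℕ, m < n → innerS l1 0 (Q n) (X ^ m) = 0)
    (n : ℕ) (f : Polynomial ℝ) (hf : f.degree < (n : ℕ)) : innerS l1 0 (Q n) f = 0 := by
  by_cases h0 : f = 0
  · simp [h0, SF_innerS_eq, innerF]
  have hnd : f.natDegree < n := (natDegree_lt_iff_degree_lt h0).2 hf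
  conv_lhs => rw [f.as_sum_range' n hnd]
  rw [SF_innerS_sum]
  refine Finset.sum_eq_zero fun i hi => ?_
  rw [← C_mul_X_pow_eq_monomial, SF_innerS_C_mul_right,
    hQorth n i (Finset.mem_range.1 hi), mul_zero]

lemma SF_expand (P : ℕ → Polynomial ℝ)
    (hPmonic : ∀ n, (P n).Monic) (hPdeg : ∀ n, (P n).natDegree = n) :
    ∀ (m : ℕ) (f : Polynomial ℝ), f.degree < (m : ℕ) →
      ∃ e : ℕ → ℝ, f = ∑ j ∈ Finset.range m, C (e j) * P j := by
  intro m
  induction m with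
  | zero =>
      intro f hf
      refine ⟨0, ?_⟩
      have : f = 0 := by
        rw [← degree_eq_bot]
        exact Nat.WithBot.lt_zero_iff.1 (by simpa using hf)
      simp [this]
  | succ m ih =>
      intro f hf
      set g : Polynomial ℝ := f - C (f.coeff m) * P m with hg
      have hgd : g.degree < (m : ℕ) := by
        rw [degree_lt_iff_coeff_zero]
        intro j hj
        have hPc : (P m).coeff j = if j = m then 1 else 0 := by
          split_ifs with h
          · subst h; simpa [hPdeg j] using (hPmonic j).coeff_natDegree
          · exact coeff_eq_zero_of_natDegree_lt (by rw [hPdeg m]; omega)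
        by_cases h : j = m
        · subst h; simp [hg, hPc]
        · have hfc : f.coeff j = 0 := by
            exact (degree_lt_iff_coeff_zero f (m+1)).1 hf j (by omega)
          simp [hg, hPc, if_neg h, hfc]
      obtain ⟨e, he⟩ := ih g hgd
      refine ⟨Function.update e m (f.coeff m), ?_⟩
      rw [Finset.sum_range_succ, Function.update_self]
      have hsum : ∑ j ∈ Finset.range m, C (Function.update e m (f.coeff m) j) * P j
          = ∑ j ∈ Finset.range m, C (e j) * P j := by
        refine Finset.sum_congr rfl fun j hj => ?_
        rw [Function.update_of_ne (by simp at hj; omega)]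
      rw [hsum, ← he, hg]
      ring

lemma SF_ratio_tendsto (t ρ : ℕ → ℝ)
    (ht_even : ∀ i, 0 < t (2 * i)) (ht_odd : ∀ i, t (2 * i + 1) = 0)
    (hρ : ∀ m, t (m + 2) = ρ m * t m)
    (hρlim : Tendsto ρ atTop (𝓝 1)) :
    Tendsto (fun m => t m / (∑ j ∈ Finset.range m, t j)) atTop (𝓝 0) := by
  have ht_nonneg : ∀ j, 0 ≤ t j := by
    intro j
    rcases Nat.even_or_odd j with ⟨i, hi⟩ | ⟨i, hi⟩
    · have := ht_even i; rw [hi]; rw [two_mul] at this; linarith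
    · rw [hi, ht_odd i]
  rw [Metric.tendsto_atTop]
  intro ε hε
  set N : ℕ := ⌈2 / ε⌉₊ + 1 with hN
  have hNpos : 0 < (N : ℝ) := by positivity
  have hNε : 2 / (N : ℝ) < ε := by
    rw [div_lt_iff₀ hNpos]
    have h1 : 2 / ε < (N : ℝ) := by
      calc 2 / ε ≤ (⌈2 / ε⌉₊ : ℝ) := Nat.le_ceil _
        _ < (N : ℝ) := by rw [hN]; push_cast; linarith
    have h2 := (div_lt_iff₀ hε).1 h1
    linarith
  have h2N : (0:ℝ) < 1 / (2 * N) := by positivity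
  obtain ⟨M, hM⟩ := (Metric.tendsto_atTop.1 hρlim) (1 / (2 * N)) h2N
  have hub : ∀ m ≥ M, ρ m ≤ 1 + 1 / (2 * N) := by
    intro m hm
    have := hM m hm
    rw [Real.dist_eq] at this
    have := abs_lt.1 this
    linarith [this.2]
  have key : ∀ n, n ≥ M + 2 * N + 2 → ∀ s, s ≤ N →
      t n ≤ (1 + (s : ℝ) / N) * t (n - 2 * s) := by
    intro n hn s
    induction s with
    | zero => intro _; simp
    | succ s ih =>
        intro hs
        have hih := ih (by omega)
        have heq : n - 2 * s = (n - 2 * (s + 1)) + 2 := by omega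
        have hρs : t (n - 2 * s) = ρ (n - 2 * (s + 1)) * t (n - 2 * (s + 1)) := by
          rw [heq]; exact hρ _
        have hMs : n - 2 * (s + 1) ≥ M := by omega
        have hρle := hub _ hMs
        have htnn := ht_nonneg (n - 2 * (s + 1))
        have hfact : (1 + (s : ℝ) / N) * (1 + 1 / (2 * N)) ≤ 1 + ((s : ℝ) + 1) / N := by
          have hsN : (s : ℝ) ≤ (N : ℝ) := by exact_mod_cast Nat.le_of_succ_le hs
          rw [← sub_nonneg]
          have hid : (1 + ((s:ℝ) + 1) / N) - (1 + (s : ℝ) / N) * (1 + 1 / (2 * N))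
              = ((N:ℝ) - s) / (2 * N ^ 2) := by
            field_simp
            ring
          rw [hid]
          apply div_nonneg (by linarith) (by positivity)
        calc t n ≤ (1 + (s : ℝ) / N) * t (n - 2 * s) := hih
          _ = (1 + (s : ℝ) / N) * (ρ (n - 2 * (s + 1)) * t (n - 2 * (s + 1))) := by
              rw [hρs]
          _ ≤ (1 + (s : ℝ) / N) * ((1 + 1 / (2 * N)) * t (n - 2 * (s + 1))) := by
              have h1 : (0:ℝ) ≤ 1 + (s : ℝ) / N := by positivity
              exact mul_le_mul_of_nonneg_left
                (mul_le_mul_of_nonneg_right hρle htnn) h1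
          _ ≤ (1 + ((s : ℝ) + 1) / N) * t (n - 2 * (s + 1)) := by
              rw [← mul_assoc]
              exact mul_le_mul_of_nonneg_right hfact htnn
          _ = (1 + ((s + 1 : ℕ) : ℝ) / N) * t (n - 2 * (s + 1)) := by push_cast; ring
  refine ⟨M + 2 * N + 2, fun n hn => ?_⟩
  rcases Nat.even_or_odd n with ⟨i, hi⟩ | ⟨i, hi⟩
  · have hneven : n = 2 * i := by omega
    have htn : 0 < t n := hneven ▸ ht_even i
    have hterm : ∀ s, s < N → t n / 2 ≤ t (n - 2 * (s + 1)) := by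
      intro s hs
      have hk := key n hn (s + 1) (by omega)
      have h2 : (1 + ((s:ℝ) + 1) / N) ≤ 2 := by
        have h3 : ((s:ℝ) + 1) ≤ (N : ℝ) := by exact_mod_cast Nat.succ_le_of_lt hs
        have := div_le_one_of_le₀ h3 hNpos.le
        linarith
      have htnn := ht_nonneg (n - 2 * (s + 1))
      rw [Nat.cast_add, Nat.cast_one] at hk
      have hA : (1 + ((s:ℝ) + 1) / N) * t (n - 2 * (s + 1)) ≤ 2 * t (n - 2 * (s + 1)) :=
        mul_le_mul_of_nonneg_right h2 htnn
      linarith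
    have hS : (N : ℝ) * (t n / 2) ≤ ∑ j ∈ Finset.range n, t j := by
      have hsub : (Finset.range N).image (fun s => n - 2 * (s + 1)) ⊆ Finset.range n := by
        intro j hj
        simp only [Finset.mem_image, Finset.mem_range] at hj ⊢
        obtain ⟨s, hs, rfl⟩ := hj
        omega
      calc (N : ℝ) * (t n / 2) = ∑ _s ∈ Finset.range N, (t n / 2) := by
            rw [Finset.sum_const, Finset.card_range, nsmul_eq_mul]
        _ ≤ ∑ s ∈ Finset.range N, t (n - 2 * (s + 1)) :=
            Finset.sum_le_sum fun s hs => hterm s (Finset.mem_range.1 hs)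
        _ = ∑ j ∈ (Finset.range N).image (fun s => n - 2 * (s + 1)), t j := by
            rw [Finset.sum_image]
            intro s hs s' hs' h
            simp only [Finset.coe_range, Set.mem_Iio] at hs hs' h
            omega
        _ ≤ ∑ j ∈ Finset.range n, t j :=
            Finset.sum_le_sum_of_subset_of_nonneg hsub fun j _ _ => ht_nonneg j
    have hSpos : 0 < ∑ j ∈ Finset.range n, t j := lt_of_lt_of_le (by positivity) hS
    rw [Real.dist_eq, sub_zero, abs_of_nonneg (div_nonneg htn.le hSpos.le)]
    calc t n / (∑ j ∈ Finset.range n, t j) ≤ t n / ((N : ℝ) * (t n / 2)) := by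
          exact div_le_div_of_nonneg_left htn.le (by positivity) hS
      _ = 2 / N := by field_simp
      _ < ε := hNε
  · have : t n = 0 := by rw [hi]; exact ht_odd i
    simp [this, hε, Real.dist_eq]

end SFAux

open Filter Topology in
/-- Case `λ₂ = 0`: `a_n/√n → 1/(2√3)` and `b_n/√n → 1/(2√3)`, where
`a n = k n / k̂ (n-1)` and `b n = k̂ n / k (n-1)`. -/
theorem sobolev_freud_ab_asymptotics
    (l1 : ℝ) (hl1 : 0 ≤ l1)
    (P Q : ℕ → Polynomial ℝ) (k khat : ℕ → ℝ)
    (hPmonic : ∀ n, (P n).Monic) (hPdeg : ∀ n, (P n).natDegree = n)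
    (hPorth : ∀ n m : ℕ, m < n → innerF (P n) (X ^ m) = 0)
    (hQmonic : ∀ n, (Q n).Monic) (hQdeg : ∀ n, (Q n).natDegree = n)
    (hQorth : ∀ n m : ℕ, m < n → innerS l1 0 (Q n) (X ^ m) = 0)
    (hk : ∀ n, k n = innerF (P n) (P n))
    (hkhat : ∀ n, khat n = innerS l1 0 (Q n) (Q n))
    (c : ℕ → ℝ) (hP0 : P 0 = 1) (hP1 : P 1 = X)
    (hrec : ∀ n, 1 ≤ n → X * P n = P (n + 1) + C (c n) * P (n - 1))
    (hc : Tendsto (fun n => c n / Real.sqrt n) atTop (𝓝 (1 / (2 * Real.sqrt 3))))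
    (a b : ℕ → ℝ) (ha : ∀ n, a n = k n / khat (n - 1))
    (hb : ∀ n, b n = khat n / k (n - 1)) :
    Tendsto (fun n => a n / Real.sqrt n) atTop (𝓝 (1 / (2 * Real.sqrt 3))) ∧
    Tendsto (fun n => b n / Real.sqrt n) atTop (𝓝 (1 / (2 * Real.sqrt 3))) := by
  have hkpos : ∀ n, 0 < k n := fun n => (hk n) ▸ SF_pos (P n) (hPmonic n).ne_zero
  have hkne : ∀ n, k n ≠ 0 := fun n => (hkpos n).ne'
  have orthF := SF_orthF P hPorth
  have orthS := SF_orthS l1 Q hQorth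
  have hPdegree : ∀ n, (P n).degree = (n : ℕ) := fun n => by
    rw [degree_eq_natDegree (hPmonic n).ne_zero, hPdeg n]
  have hQdegree : ∀ n, (Q n).degree = (n : ℕ) := fun n => by
    rw [degree_eq_natDegree (hQmonic n).ne_zero, hQdeg n]
  -- `innerF (P n) (X^n) = k n`
  have hXn : ∀ n, innerF (P n) (X ^ n) = k n := by
    intro n
    have hd : ((X : Polynomial ℝ) ^ n - P n).degree < (n : ℕ) := by
      have := degree_sub_lt (p := (X : Polynomial ℝ) ^ n) (q := P n)
        (by rw [degree_X_pow, hPdegree n]) (pow_ne_zero n X_ne_zero)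
        (by rw [(monic_X_pow n).leadingCoeff, (hPmonic n).leadingCoeff])
      rwa [degree_X_pow] at this
    have hsplit : (X : Polynomial ℝ) ^ n = P n + ((X : Polynomial ℝ) ^ n - P n) := by ring
    rw [hsplit, innerF_add_right, orthF n _ hd, add_zero, ← hk]
  -- recurrence for `k`
  have hkrec : ∀ n, k (n + 1) = c (n + 1) * k n := by
    intro n
    have h1 : innerF (P (n + 1)) (X ^ (n + 1)) = innerF (X * P (n + 1)) (X ^ n) := by
      rw [innerF_X_shift]; congr 1; ring
    have h2 := hXn (n + 1)
    rw [h1, hrec (n + 1) (by omega)] at h2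
    simp only [Nat.add_sub_cancel] at h2
    rw [innerF_add_left, innerF_C_mul_left,
      orthF (n + 2) _ (by rw [degree_X_pow]; exact_mod_cast (by omega : n < n + 2)),
      hXn n, zero_add] at h2
    exact h2.symm
  have hcpos : ∀ n, 0 < c (n + 1) := by
    intro n
    have h := hkrec n
    nlinarith [hkpos (n + 1), hkpos n]
  -- the quantities t and Spre
  set t : ℕ → ℝ := fun n => (P n).eval 0 ^ 2 / k n with ht
  set Spre : ℕ → ℝ := fun n => ∑ j ∈ Finset.range n, t j with hSpre
  have htnonneg : ∀ n, 0 ≤ t n := fun n => div_nonneg (sq_nonneg _) (hkpos n).le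
  have hSnonneg : ∀ n, 0 ≤ Spre n := fun n => Finset.sum_nonneg fun j _ => htnonneg j
  have hDpos : ∀ n, 0 < 1 + l1 * Spre n := fun n => by
    nlinarith [mul_nonneg hl1 (hSnonneg n)]
  -- degree of Q n - P n
  have hdQP : ∀ n, ((Q n) - (P n)).degree < (n : ℕ) := by
    intro n
    have := degree_sub_lt (p := Q n) (q := P n)
      (by rw [hQdegree n, hPdegree n]) (hQmonic n).ne_zero
      (by rw [(hQmonic n).leadingCoeff, (hPmonic n).leadingCoeff])
    rwa [hQdegree n] at this
  -- identity (A)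
  have hA : ∀ n, khat n = k n + l1 * (Q n).eval 0 * (P n).eval 0 := by
    intro n
    have hsplit : Q n = P n + (Q n - P n) := by ring
    have h1 : innerF (Q n) (P n) = k n := by
      rw [innerF_symm]
      conv_lhs => rw [hsplit]
      rw [innerF_add_right, orthF n _ (hdQP n), add_zero, ← hk]
    calc khat n = innerS l1 0 (Q n) (Q n) := hkhat n
      _ = innerS l1 0 (Q n) (P n) + innerS l1 0 (Q n) (Q n - P n) := by
          rw [← SF_innerS_add_right, ← hsplit]
      _ = innerS l1 0 (Q n) (P n) := by rw [orthS n _ (hdQP n), add_zero]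
      _ = k n + l1 * (Q n).eval 0 * (P n).eval 0 := by
          rw [SF_innerS_eq, h1]
  -- identity (B)
  have hB : ∀ n, (Q n).eval 0 * (1 + l1 * Spre n) = (P n).eval 0 := by
    intro n
    obtain ⟨e, he⟩ := SF_expand P hPmonic hPdeg n (Q n - P n) (hdQP n)
    have hPP : ∀ i j : ℕ, i ≠ j → innerF (P i) (P j) = 0 := by
      intro i j hij
      rcases lt_or_gt_of_ne hij with h | h
      · rw [innerF_symm]; exact orthF j _ (by rw [hPdegree i]; exact_mod_cast h)
      · exact orthF i _ (by rw [hPdegree j]; exact_mod_cast h)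
    have hej : ∀ j, j < n → e j * k j = -(l1 * (Q n).eval 0 * (P j).eval 0) := by
      intro j hj
      have h1 : innerF (Q n - P n) (P j) = e j * k j := by
        rw [he, innerF_symm, innerF_sum]
        rw [Finset.sum_eq_single j]
        · rw [innerF_C_mul_right, innerF_symm, ← hk]
        · intro i hi hij
          rw [innerF_C_mul_right, hPP j i (Ne.symm hij), mul_zero]
        · intro hcon
          exact absurd (Finset.mem_range.2 hj) hcon
      have h2 : innerF (Q n - P n) (P j) = -(l1 * (Q n).eval 0 * (P j).eval 0) := by
        rw [innerF_sub_left]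
        have hQP : innerF (Q n) (P j) = -(l1 * (Q n).eval 0 * (P j).eval 0) := by
          have h0 := orthS n (P j) (by rw [hPdegree j]; exact_mod_cast hj)
          rw [SF_innerS_eq] at h0
          linarith
        have hPnj : innerF (P n) (P j) = 0 := hPP n j (by omega)
        rw [hQP, hPnj]; ring
      rw [← h1, h2]
    have heval := congrArg (Polynomial.eval 0) he
    simp only [eval_sub, eval_finset_sum, eval_mul, eval_C] at heval
    have hsum : ∑ j ∈ Finset.range n, e j * (P j).eval 0
        = -(l1 * (Q n).eval 0) * Spre n := by
      rw [hSpre, Finset.mul_sum]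
      refine Finset.sum_congr rfl fun j hj => ?_
      have hjn := Finset.mem_range.1 hj
      have hkj := hkne j
      have hej' : e j = -(l1 * (Q n).eval 0 * (P j).eval 0) / k j :=
        (eq_div_iff hkj).2 (hej j hjn)
      rw [hej', ht]
      ring
    rw [hsum] at heval
    linear_combination heval
  -- consequences
  have hQ0 : ∀ n, (Q n).eval 0 = (P n).eval 0 / (1 + l1 * Spre n) := fun n =>
    eq_div_of_mul_eq (hDpos n).ne' (hB n)
  have hAform : ∀ n, khat n = k n + l1 * (P n).eval 0 ^ 2 / (1 + l1 * Spre n) := by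
    intro n
    rw [hA n, hQ0 n]
    field_simp [(hDpos n).ne']
  have hkhatpos : ∀ n, 0 < khat n := by
    intro n
    rw [hAform n]
    have := div_nonneg (mul_nonneg hl1 (sq_nonneg ((P n).eval 0))) (hDpos n).le
    linarith [hkpos n]
  have hratform : ∀ n, khat n / k n = 1 + l1 * t n / (1 + l1 * Spre n) := by
    intro n
    rw [hAform n, ht]
    field_simp [hkne n, (hDpos n).ne']
  -- t facts
  have htrec : ∀ m, t (m + 2) = (c (m + 1) / c (m + 2)) * t m := by
    intro m
    have hPrec0 : (P (m + 2)).eval 0 = -(c (m + 1) * (P m).eval 0) := by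
      have h0 := congrArg (Polynomial.eval 0) (hrec (m + 1) (by omega))
      simp only [Nat.add_sub_cancel, eval_mul, eval_add, eval_X, eval_C, zero_mul] at h0
      linarith
    have hk2 : k (m + 2) = c (m + 2) * (c (m + 1) * k m) := by
      rw [hkrec (m + 1), hkrec m]
    rw [ht]
    simp only
    rw [hPrec0, hk2]
    field_simp [(hcpos m).ne', (hcpos (m + 1)).ne', hkne m]
  have hpar : ∀ i, 0 < t (2 * i) ∧ t (2 * i + 1) = 0 := by
    intro i
    induction i with
    | zero =>
        constructor
        · have h0 : t 0 = 1 / k 0 := by simp [ht, hP0]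
          rw [mul_zero, h0]
          exact div_pos one_pos (hkpos 0)
        · simp [ht, hP1]
    | succ i ih =>
        have h1 : 2 * (i + 1) = 2 * i + 2 := by ring
        have h2 : 2 * (i + 1) + 1 = (2 * i + 1) + 2 := by ring
        constructor
        · rw [h1, htrec (2 * i)]
          exact mul_pos (div_pos (hcpos (2 * i)) (hcpos (2 * i + 1))) ih.1
        · rw [h2, htrec (2 * i + 1), ih.2, mul_zero]
  -- ratio limit
  have h3 : 0 < Real.sqrt 3 := Real.sqrt_pos.2 (by norm_num)
  have hL : 0 < 1 / (2 * Real.sqrt 3) := by positivity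
  have hf1 : Tendsto (fun m : ℕ => c (m + 1) / Real.sqrt ((m + 1 : ℕ) : ℝ))
      atTop (𝓝 (1 / (2 * Real.sqrt 3))) := hc.comp (tendsto_add_atTop_nat 1)
  have hf2 : Tendsto (fun m : ℕ => c (m + 2) / Real.sqrt ((m + 2 : ℕ) : ℝ))
      atTop (𝓝 (1 / (2 * Real.sqrt 3))) := hc.comp (tendsto_add_atTop_nat 2)
  have hquot : Tendsto (fun m : ℕ => ((m : ℝ) + 1) / ((m : ℝ) + 2)) atTop (𝓝 1) := by
    have h0 : Tendsto (fun m : ℕ => 1 / ((m : ℝ) + 2)) atTop (𝓝 0) := by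
      have := (tendsto_one_div_add_atTop_nhds_zero_nat (𝕜 := ℝ)).comp (tendsto_add_atTop_nat 1)
      refine this.congr fun m => ?_
      simp only [Function.comp]
      push_cast
      ring_nf
    have := tendsto_const_nhds (x := (1:ℝ)) (f := atTop (α := ℕ)) |>.sub h0
    rw [sub_zero] at this
    refine this.congr fun m => ?_
    have hm2 : ((m : ℝ) + 2) ≠ 0 := by positivity
    field_simp
    ring
  have hgs : Tendsto (fun m : ℕ => Real.sqrt ((m + 1 : ℕ) : ℝ) / Real.sqrt ((m + 2 : ℕ) : ℝ))
      atTop (𝓝 1) := by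
    have hcont := (Real.continuous_sqrt.tendsto 1).comp hquot
    rw [Real.sqrt_one] at hcont
    refine hcont.congr fun m => ?_
    simp only [Function.comp]
    rw [Real.sqrt_div (by positivity : (0:ℝ) ≤ (m : ℝ) + 1)]
    push_cast
    ring_nf
  have hρlim : Tendsto (fun m : ℕ => c (m + 1) / c (m + 2)) atTop (𝓝 1) := by
    have hmul := (hf1.div hf2 (by positivity)).mul hgs
    have heq1 : (1 / (2 * Real.sqrt 3)) / (1 / (2 * Real.sqrt 3)) * 1 = 1 := by
      rw [div_self hL.ne', mul_one]
    rw [heq1] at hmul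
    refine hmul.congr fun m => ?_
    have hs1 : (0:ℝ) < Real.sqrt ((m + 1 : ℕ) : ℝ) := Real.sqrt_pos.2 (by positivity)
    have hs2 : (0:ℝ) < Real.sqrt ((m + 2 : ℕ) : ℝ) := Real.sqrt_pos.2 (by positivity)
    have hcne : c (m + 2) ≠ 0 := (hcpos (m + 1)).ne'
    rw [Pi.div_apply]
    field_simp [hs1.ne', hs2.ne', hcne]
  have hratio0 : Tendsto (fun m => t m / Spre m) atTop (𝓝 0) := by
    have := SF_ratio_tendsto t (fun m => c (m + 1) / c (m + 2))
      (fun i => (hpar i).1) (fun i => (hpar i).2) htrec hρlim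
    exact this
  -- khat n / k n → 1
  have hSpos : ∀ n, 1 ≤ n → 0 < Spre n := by
    intro n hn
    have h0 : t 0 ≤ Spre n := by
      refine Finset.single_le_sum (f := t) (fun j _ => htnonneg j) ?_
      exact Finset.mem_range.2 (by omega)
    have ht0 : 0 < t 0 := by
      have := (hpar 0).1
      rwa [mul_zero] at this
    linarith
  have hsmall : Tendsto (fun n => l1 * t n / (1 + l1 * Spre n)) atTop (𝓝 0) := by
    refine tendsto_of_tendsto_of_tendsto_of_le_of_le' tendsto_const_nhds hratio0
      (Filter.Eventually.of_forall fun n =>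
        div_nonneg (mul_nonneg hl1 (htnonneg n)) (hDpos n).le) ?_
    filter_upwards [eventually_ge_atTop 1] with n hn
    rw [div_le_div_iff₀ (hDpos n) (hSpos n hn)]
    nlinarith [htnonneg n, mul_nonneg (mul_nonneg hl1 (htnonneg n)) (hSnonneg n)]
  have hρk1 : Tendsto (fun n => khat n / k n) atTop (𝓝 1) := by
    have := (tendsto_const_nhds (x := (1:ℝ)) (f := atTop (α := ℕ))).add hsmall
    rw [add_zero] at this
    exact this.congr fun n => (hratform n).symm
  have hinv : Tendsto (fun n => k n / khat n) atTop (𝓝 1) := by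
    have := hρk1.inv₀ one_ne_zero
    rw [inv_one] at this
    exact this.congr fun n => by rw [inv_div]
  have hshift : Tendsto (fun n => k (n - 1) / khat (n - 1)) atTop (𝓝 1) :=
    hinv.comp (tendsto_sub_atTop_nat 1)
  constructor
  · have hmul := hshift.mul hc
    rw [one_mul] at hmul
    refine hmul.congr' ?_
    filter_upwards [eventually_ge_atTop 1] with n hn
    have hn1 : n - 1 + 1 = n := by omega
    have hkn : k n = c n * k (n - 1) := by
      have := hkrec (n - 1)
      rwa [hn1] at this
    rw [ha n, hkn, div_div, div_mul_div_comm, mul_comm (k (n - 1)) (c n)]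
  · have hmul := hρk1.mul hc
    rw [one_mul] at hmul
    refine hmul.congr' ?_
    filter_upwards [eventually_ge_atTop 1] with n hn
    have hn1 : n - 1 + 1 = n := by omega
    have hkn : k n = c n * k (n - 1) := by
      have := hkrec (n - 1)
      rwa [hn1] at this
    have hcn : c n ≠ 0 := by
      have := hcpos (n - 1)
      rw [hn1] at this
      exact this.ne'
    have hsn : Real.sqrt (n : ℝ) ≠ 0 :=
      Real.sqrt_ne_zero'.2 (by exact_mod_cast (by omega : 0 < n))
    rw [hb n, hkn]
    field_simp [hcn, hkne (n - 1)]
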